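/- There is a constant D₀ > 0, depending only on the bounds 0 < ξ̄₀ ≤ ξ₀ ≤ ξ̄₁ < 1, such that |m₁₁(ξ₀+θ)| ≥ D₀/(1+|θ|) for all real θ, where m₁₁(s) = (2i-(ξ₀+s)β)/(2q(s)), β = 1+2iξ₀, q(s) = 1+2is-βs². One may take D₀ = min(1/2, 1-ξ̄₁)/(√2 q₁) with q₁ the upper bound constant for |q|. -/

import Mathlib

open Complex

private lemma keyA (c x : ℝ) (h0 : 0 < c) (h1 : c ≤ 1/2) (h2 : c ≤ 1 - x) (h3 : 0 < x) :
    c^2*(1+4*x^2) ≤ 1 := by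
  have hx1 : x < 1 := by linarith
  rcases le_or_gt x (1/2) with h | h
  · have hc : c^2 ≤ 1/4 := by nlinarith
    nlinarith [sq_nonneg x, sq_nonneg c]
  · have hc : c^2 ≤ (1-x)^2 := by nlinarith
    have key : (1-x)^2*(1+4*x^2) ≤ 1 := by
      nlinarith [mul_nonneg (mul_nonneg h3.le (by linarith : (0:ℝ) ≤ 1-x)) (sq_nonneg (2*x-1))]
    nlinarith [sq_nonneg x, sq_nonneg (1-x)]

private lemma keyA' (c x : ℝ) (h0 : 0 < c) (h1 : c ≤ 1/2) (h2 : c ≤ 1 - x) (h3 : 0 < x) :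
    c^2*((1-2*x^2)^2 + x^2) ≤ 1/4 := by
  have hx1 : x < 1 := by linarith
  rcases le_or_gt x (1/2) with h | h
  · have hc : c^2 ≤ 1/4 := by nlinarith
    have hg : (1-2*x^2)^2 + x^2 ≤ 1 := by
      have hx2 : 4*x^2 ≤ 3 := by nlinarith
      nlinarith [mul_nonneg (sq_nonneg x) (by linarith : (0:ℝ) ≤ 3 - 4*x^2)]
    have hg0 : (0:ℝ) ≤ (1-2*x^2)^2 + x^2 := by positivity
    nlinarith [mul_le_mul hc hg hg0 (by norm_num : (0:ℝ) ≤ 1/4)]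
  · have hc : c^2 ≤ (1-x)^2 := by nlinarith
    have key : (1-x)^2*((1-2*x^2)^2 + x^2) ≤ 1/4 := by
      nlinarith [sq_nonneg ((1-x)*(2*x-1)), sq_nonneg ((1-x)*x), sq_nonneg ((1-x)*(2*x^2-1)), sq_nonneg (x*(2*x-1)), sq_nonneg ((1-x)*x*(2*x-1)), mul_nonneg (mul_nonneg h3.le (by linarith : (0:ℝ) ≤ 1-x)) (sq_nonneg (2*x-1)), sq_nonneg (2*x-1), sq_nonneg (1-x)]
    have hg0 : (0:ℝ) ≤ (1-2*x^2)^2 + x^2 := by positivity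
    nlinarith [mul_le_mul_of_nonneg_right hc hg0]

private lemma keymainA (c x a : ℝ) (h0 : 0 < c) (h1 : c ≤ 1/2) (h2 : c ≤ 1 - x) (h3 : 0 < x) :
    2*c^2*(1+(a-2*x)^2) ≤ a^2 + (2-2*x*a)^2 := by
  have hA := keyA c x h0 h1 h2 h3
  have hA' := keyA' c x h0 h1 h2 h3
  have h4 : (0:ℝ) < 1+4*x^2 := by positivity
  have hB : 4*c^2 ≤ a^2 + (2-2*x*a)^2 := by
    nlinarith [sq_nonneg ((1+4*x^2)*a - 4*x), mul_le_mul_of_nonneg_right hA h4.le]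
  have hC : 4*c^2*(a-2*x)^2 ≤ a^2 + (2-2*x*a)^2 := by
    have hg0 : (0:ℝ) ≤ a^2 + (2-2*x*a)^2 := by positivity
    nlinarith [sq_nonneg ((2*c-4*c*x^2)*(2-2*x*a) + 2*c*x*a), mul_le_mul_of_nonneg_right hA' hg0]
  nlinarith [hB, hC]

private lemma keymain (c x θ : ℝ) (h0 : 0 < c) (h1 : c ≤ 1/2) (h2 : c ≤ 1 - x) (h3 : 0 < x) :
    2*c^2*(1+θ^2) ≤ (2*x+θ)^2 + (2-2*x*(2*x+θ))^2 := by
  have h := keymainA c x (2*x+θ) h0 h1 h2 h3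
  have he : 2*x+θ-2*x = θ := by ring
  rw [he] at h
  exact h

theorem m11_lower_bound (ξb₀ ξb₁ : ℝ) (h₀ : 0 < ξb₀) (h₀₁ : ξb₀ ≤ ξb₁) (h₁ : ξb₁ < 1)
    (ξ₀ : ℝ) (hξ : ξ₀ ∈ Set.Icc ξb₀ ξb₁)
    (β : ℂ) (hβ : β = 1 + 2 * I * ξ₀)
    (q : ℝ → ℂ) (hq : ∀ s : ℝ, q s = 1 + 2 * I * s - β * s ^ 2)
    (m : ℝ → ℂ) (hm : ∀ s : ℝ, m s = (2 * I - (ξ₀ + s) * β) / (2 * q s))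
    (q₁ : ℝ) (hq₁pos : 0 < q₁) (hq₁ : ∀ θ : ℝ, ‖q (ξ₀ + θ)‖ ≤ q₁ * (1 + θ ^ 2)) :
    ∃ D₀ : ℝ, 0 < D₀ ∧ D₀ = min (1 / 2) (1 - ξb₁) / (Real.sqrt 2 * q₁) ∧
      ∀ θ : ℝ, D₀ / (1 + |θ|) ≤ ‖m (ξ₀ + θ)‖ := by
  have hx0 : 0 < ξ₀ := lt_of_lt_of_le h₀ hξ.1
  have hx1 : ξ₀ < 1 := lt_of_le_of_lt hξ.2 h₁
  set c : ℝ := min (1/2) (1 - ξb₁) with hcdef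
  have hcpos : 0 < c := lt_min (by norm_num) (by linarith)
  have hc1 : c ≤ 1/2 := min_le_left _ _
  have hc2 : c ≤ 1 - ξ₀ := le_trans (min_le_right _ _) (by linarith [hξ.2])
  have hs2pos : (0:ℝ) < Real.sqrt 2 := by positivity
  refine ⟨c / (Real.sqrt 2 * q₁), by positivity, by norm_num, ?_⟩
  intro θ
  set s : ℝ := ξ₀ + θ with hsdef
  -- real and imaginary parts of q s
  have hqre : (q s).re = 1 - s^2 := by rw [hq s, hβ]; simp [pow_two, Complex.mul_re, Complex.mul_im]
  have hqim : (q s).im = 2*s - 2*ξ₀*s^2 := by rw [hq s, hβ]; simp [pow_two, Complex.mul_re, Complex.mul_im]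
  -- q s ≠ 0
  have hqne : q s ≠ 0 := by
    intro h
    rw [h] at hqre hqim
    simp at hqre hqim
    have e1 : s^2 = 1 := by linarith
    have e2 : s = ξ₀ := by nlinarith
    nlinarith
  have hqn : 0 < ‖q s‖ := norm_pos_iff.mpr hqne
  -- numerator
  set N : ℂ := 2 * I - ((ξ₀:ℂ) + (s:ℝ)) * β with hNdef
  have hNre : N.re = -(2*ξ₀+θ) := by rw [hNdef, hβ]; simp [hsdef, Complex.mul_re, Complex.mul_im]; ring
  have hNim : N.im = 2 - 2*ξ₀*(2*ξ₀+θ) := by rw [hNdef, hβ]; simp [hsdef, Complex.mul_re, Complex.mul_im]; ring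
  have hNsq : ‖N‖^2 = (2*ξ₀+θ)^2 + (2-2*ξ₀*(2*ξ₀+θ))^2 := by
    rw [Complex.sq_norm, Complex.normSq_apply, hNre, hNim]; ring
  -- key lower bound on ‖N‖
  have hkey : 2*c^2*(1+θ^2) ≤ ‖N‖^2 := by
    rw [hNsq]; exact keymain c ξ₀ θ hcpos hc1 hc2 hx0
  have hNlb : Real.sqrt 2 * c * Real.sqrt (1+θ^2) ≤ ‖N‖ := by
    have h1 : Real.sqrt (2*c^2*(1+θ^2)) ≤ Real.sqrt (‖N‖^2) := Real.sqrt_le_sqrt hkey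
    rw [Real.sqrt_sq (norm_nonneg _)] at h1
    calc Real.sqrt 2 * c * Real.sqrt (1+θ^2)
        = Real.sqrt ((Real.sqrt 2 * c * Real.sqrt (1+θ^2))^2) :=
          (Real.sqrt_sq (by positivity)).symm
      _ = Real.sqrt (2*c^2*(1+θ^2)) := by
          rw [mul_pow, mul_pow, Real.sq_sqrt (by norm_num : (0:ℝ) ≤ 2),
            Real.sq_sqrt (by positivity : (0:ℝ) ≤ 1+θ^2)]
      _ ≤ ‖N‖ := h1
  -- sqrt(1+θ²) ≤ 1+|θ|
  have hsqle : Real.sqrt (1+θ^2) ≤ 1 + |θ| := by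
    have h1 : (1:ℝ)+θ^2 ≤ (1+|θ|)^2 := by nlinarith [abs_nonneg θ, _root_.sq_abs θ]
    calc Real.sqrt (1+θ^2) ≤ Real.sqrt ((1+|θ|)^2) := Real.sqrt_le_sqrt h1
      _ = 1+|θ| := Real.sqrt_sq (by positivity)
  -- norm of m
  have hmn : ‖m s‖ = ‖N‖ / (2 * ‖q s‖) := by
    rw [hm s, ← hNdef, norm_div, norm_mul]
    norm_num
  rw [hmn, div_le_div_iff₀ (by positivity) (by positivity)]
  -- reduce to: c/(√2 q₁) * (2‖q s‖) ≤ ‖N‖ * (1+|θ|)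
  have hqup : ‖q s‖ ≤ q₁ * (1+θ^2) := hq₁ θ
  have step1 : c / (Real.sqrt 2 * q₁) * (2 * ‖q s‖)
      ≤ c / (Real.sqrt 2 * q₁) * (2 * (q₁ * (1+θ^2))) := by
    have h0 : (0:ℝ) ≤ c / (Real.sqrt 2 * q₁) := by positivity
    exact mul_le_mul_of_nonneg_left (by linarith [hqup]) h0
  have heq : c / (Real.sqrt 2 * q₁) * (2 * (q₁ * (1+θ^2)))
      = Real.sqrt 2 * c * (1+θ^2) := by
    have h2 : Real.sqrt 2 * Real.sqrt 2 = 2 := Real.mul_self_sqrt (by norm_num)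
    have hne : Real.sqrt 2 * q₁ ≠ 0 := by positivity
    field_simp
    linear_combination (-1) * h2
  have step2 : Real.sqrt 2 * c * (1+θ^2) ≤ ‖N‖ * (1+|θ|) := by
    have hfac : Real.sqrt 2 * c * (1+θ^2)
        = (Real.sqrt 2 * c * Real.sqrt (1+θ^2)) * Real.sqrt (1+θ^2) := by
      have h3 := Real.mul_self_sqrt (by positivity : (0:ℝ) ≤ 1+θ^2)
      linear_combination (Real.sqrt 2 * c) * h3.symm
    rw [hfac]
    exact mul_le_mul hNlb hsqle (Real.sqrt_nonneg _) (norm_nonneg _)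
  rw [heq] at step1
  linarith [step1, step2]
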